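/- Let Γ be a group and let γ₁, γ₂ ∈ Γ generate a free subsemigroup, i.e., any two distinct nonempty words in the letters γ₁, γ₂ define distinct elements of Γ. Let w ∈ ℤΓ be the element w = (δ_e + δ_{γ₁} − δ_{γ₁²})·δ_{γ₂}, where the product is taken in the group ring ℤΓ. Then for every k ≥ 0 one has ∑_γ |(w^k)_γ| = 3^k, and the supports of the powers w^k (k = 0, 1, 2, …) are pairwise disjoint. -/

import Mathlib

namespace Stmt19Aux

/-- The three code blocks, a prefix code over `Bool`. -/
def blk : Fin 3 → List Bool := ![[false], [true, false], [true, true, false]]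

lemma blk_ne_nil (a : Fin 3) : blk a ≠ [] := by fin_cases a <;> simp [blk]

lemma blk_prefix {a b : Fin 3} {l l' : List Bool} (h : blk a ++ l = blk b ++ l') :
    a = b ∧ l = l' := by
  fin_cases a <;> fin_cases b <;> simp_all [blk]

/-- Encode a list of block indices as a list of booleans. -/
def enc (L : List (Fin 3)) : List Bool := (L.map blk).flatten

lemma enc_nil : enc [] = [] := rfl

lemma enc_cons (a : Fin 3) (L : List (Fin 3)) : enc (a :: L) = blk a ++ enc L := rfl

lemma enc_inj : Function.Injective enc := by
  intro L
  induction L with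
  | nil =>
    intro L' h
    cases L' with
    | nil => rfl
    | cons b L' =>
      rw [enc_nil, enc_cons] at h
      exact absurd h.symm (by simp [blk_ne_nil b])
  | cons a L ih =>
    intro L' h
    cases L' with
    | nil =>
      rw [enc_nil, enc_cons] at h
      exact absurd h (by simp [blk_ne_nil a])
    | cons b L' =>
      rw [enc_cons, enc_cons] at h
      obtain ⟨hab, hLL⟩ := blk_prefix h
      rw [hab, ih hLL]

variable {Γ : Type*} [Group Γ]

/-- Evaluate a boolean word in the group. -/
def φ (γ₁ γ₂ : Γ) (l : List Bool) : Γ := (l.map fun b => if b then γ₁ else γ₂).prod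

lemma φ_append (γ₁ γ₂ : Γ) (u v : List Bool) :
    φ γ₁ γ₂ (u ++ v) = φ γ₁ γ₂ u * φ γ₁ γ₂ v := by
  simp [φ]

lemma φ_inj (γ₁ γ₂ : Γ)
    (hfree : ∀ w₁ w₂ : List Bool, w₁ ≠ [] → w₂ ≠ [] →
      (w₁.map fun b => if b then γ₁ else γ₂).prod = (w₂.map fun b => if b then γ₁ else γ₂).prod →
      w₁ = w₂) : Function.Injective (φ γ₁ γ₂) := by
  have key : ∀ v : List Bool, v ≠ [] → φ γ₁ γ₂ v ≠ 1 := by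
    intro v hv h1
    have h2 : φ γ₁ γ₂ (v ++ v) = φ γ₁ γ₂ v := by
      rw [φ_append, h1, one_mul]
    have := hfree (v ++ v) v (by simp [hv]) hv h2
    have : (v ++ v).length = v.length := by rw [this]
    simp at this
    exact hv this
  intro u v h
  rcases eq_or_ne u [] with hu | hu
  · rcases eq_or_ne v [] with hv | hv
    · rw [hu, hv]
    · subst hu
      exact absurd h.symm (key v hv)
  · rcases eq_or_ne v [] with hv | hv
    · subst hv
      exact absurd h (key u hu)
    · exact hfree u v hu hv h

/-- Coefficient signs. -/
def ε : Fin 3 → ℤ := ![1, 1, -1]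

/-- The coefficient of a word. -/
def c (L : List (Fin 3)) : ℤ := (L.map ε).prod

lemma abs_ε (i : Fin 3) : |ε i| = 1 := by fin_cases i <;> simp [ε]

lemma c_nil : c [] = 1 := rfl

lemma c_cons (a : Fin 3) (L : List (Fin 3)) : c (a :: L) = ε a * c L := by
  simp [c]

lemma abs_c (L : List (Fin 3)) : |c L| = 1 := by
  induction L with
  | nil => simp [c_nil]
  | cons a L ih => rw [c_cons, abs_mul, abs_ε, ih, one_mul]

lemma w_eq (γ₁ γ₂ : Γ) (w : MonoidAlgebra ℤ Γ)
    (hw : w = (MonoidAlgebra.single (1 : Γ) (1 : ℤ) + MonoidAlgebra.single γ₁ 1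
        - MonoidAlgebra.single (γ₁ * γ₁) 1) * MonoidAlgebra.single γ₂ 1) :
    w = ∑ i : Fin 3, MonoidAlgebra.single (φ γ₁ γ₂ (blk i)) (ε i) := by
  rw [hw, sub_mul, add_mul, MonoidAlgebra.single_mul_single, MonoidAlgebra.single_mul_single,
    MonoidAlgebra.single_mul_single, Fin.sum_univ_three]
  have h0 : φ γ₁ γ₂ (blk 0) = γ₂ := by simp [φ, blk]
  have h1 : φ γ₁ γ₂ (blk 1) = γ₁ * γ₂ := by simp [φ, blk]
  have h2 : φ γ₁ γ₂ (blk 2) = γ₁ * γ₁ * γ₂ := by simp [φ, blk, mul_assoc]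
  rw [h0, h1, h2]
  have e0 : ε 0 = 1 := rfl
  have e1 : ε 1 = 1 := rfl
  have e2 : ε 2 = -1 := rfl
  rw [e0, e1, e2]
  simp [sub_eq_add_neg, MonoidAlgebra.single_neg]

lemma ofFn_cons {α : Type*} {n : ℕ} (i : α) (f : Fin n → α) :
    List.ofFn (Fin.cons i f) = i :: List.ofFn f := by
  simp [List.ofFn_succ]

lemma pow_eq (γ₁ γ₂ : Γ) (w : MonoidAlgebra ℤ Γ)
    (hw : w = (MonoidAlgebra.single (1 : Γ) (1 : ℤ) + MonoidAlgebra.single γ₁ 1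
        - MonoidAlgebra.single (γ₁ * γ₁) 1) * MonoidAlgebra.single γ₂ 1) (k : ℕ) :
    w ^ k = ∑ f : Fin k → Fin 3,
      MonoidAlgebra.single (φ γ₁ γ₂ (enc (List.ofFn f))) (c (List.ofFn f)) := by
  induction k with
  | zero =>
    simp only [pow_zero]
    rw [Finset.sum_eq_single_of_mem (fun i => i.elim0) (Finset.mem_univ _)
      (by intro b _ hb; exact absurd (funext fun i => i.elim0) hb)]
    have : List.ofFn (fun i : Fin 0 => i.elim0 : Fin 0 → Fin 3) = [] := by simp
    rw [this, enc_nil, c_nil]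
    exact MonoidAlgebra.one_def
  | succ k ih =>
    rw [pow_succ', ih, w_eq γ₁ γ₂ w hw, Finset.sum_mul_sum]
    rw [← Equiv.sum_comp (Fin.consEquiv (fun _ : Fin (k + 1) => Fin 3))
      (fun f => MonoidAlgebra.single (φ γ₁ γ₂ (enc (List.ofFn f))) (c (List.ofFn f)))]
    rw [Fintype.sum_prod_type]
    refine Finset.sum_congr rfl fun i _ => Finset.sum_congr rfl fun f _ => ?_
    rw [MonoidAlgebra.single_mul_single]
    have hE : (Fin.consEquiv (fun _ : Fin (k + 1) => Fin 3)) (i, f) = Fin.cons i f := rfl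
    rw [hE, ofFn_cons, enc_cons, φ_append, c_cons]

end Stmt19Aux

open Stmt19Aux in
/-- If `γ₁, γ₂` generate a free subsemigroup of `Γ` and
`w = (δ_e + δ_{γ₁} - δ_{γ₁²}) δ_{γ₂} ∈ ℤΓ`, then `‖w^k‖₁ = 3^k` for all `k ≥ 0` and the
supports of the powers `w^k` are pairwise disjoint. -/
theorem stmt19 {Γ : Type*} [Group Γ] (γ₁ γ₂ : Γ)
    (hfree : ∀ w₁ w₂ : List Bool, w₁ ≠ [] → w₂ ≠ [] →
      (w₁.map fun b => if b then γ₁ else γ₂).prod = (w₂.map fun b => if b then γ₁ else γ₂).prod →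
      w₁ = w₂)
    (w : MonoidAlgebra ℤ Γ)
    (hw : w = (MonoidAlgebra.single (1 : Γ) (1 : ℤ) + MonoidAlgebra.single γ₁ 1
        - MonoidAlgebra.single (γ₁ * γ₁) 1) * MonoidAlgebra.single γ₂ 1) :
    (∀ k : ℕ, ∑ γ ∈ (w ^ k).coeff.support, |(w ^ k).coeff γ| = (3 : ℤ) ^ k) ∧
    (∀ k l : ℕ, k ≠ l → Disjoint (w ^ k).coeff.support (w ^ l).coeff.support) := by
  classical
  have hφ := φ_inj γ₁ γ₂ hfree
  -- the element map
  set m : ∀ k : ℕ, (Fin k → Fin 3) → Γ :=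
    fun k f => φ γ₁ γ₂ (enc (List.ofFn f)) with hm
  have hminj : ∀ {k l : ℕ} (f : Fin k → Fin 3) (g : Fin l → Fin 3),
      m k f = m l g → k = l := by
    intro k l f g h
    have h2 : List.ofFn f = List.ofFn g := enc_inj (hφ h)
    have := congrArg List.length h2
    simpa using this
  have hminj' : ∀ {k : ℕ} (f g : Fin k → Fin 3), m k f = m k g → f = g := by
    intro k f g h
    exact List.ofFn_inj.mp (enc_inj (hφ h))
  -- value of w^k at m k f
  have happly : ∀ (k : ℕ) (f : Fin k → Fin 3), (w ^ k).coeff (m k f) = c (List.ofFn f) := by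
    intro k f
    rw [pow_eq γ₁ γ₂ w hw k, MonoidAlgebra.coeff_sum, Finsupp.finset_sum_apply]
    rw [Finset.sum_eq_single_of_mem f (Finset.mem_univ _)]
    · simp [MonoidAlgebra.coeff_single, hm]
    · intro g _ hg
      exact Finsupp.single_eq_of_ne' (fun h => hg (hminj' g f h))
  have hsupp : ∀ k : ℕ, (w ^ k).coeff.support = Finset.univ.image (m k) := by
    intro k
    apply Finset.Subset.antisymm
    · rw [pow_eq γ₁ γ₂ w hw k, MonoidAlgebra.coeff_sum]
      refine (Finsupp.support_finset_sum).trans ?_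
      intro γ hγ
      simp only [Finset.mem_biUnion] at hγ
      obtain ⟨f, _, hf⟩ := hγ
      have := Finsupp.support_single_subset hf
      simp only [Finset.mem_singleton] at this
      simp only [Finset.mem_image]
      exact ⟨f, Finset.mem_univ _, this.symm⟩
    · intro γ hγ
      simp only [Finset.mem_image] at hγ
      obtain ⟨f, _, hf⟩ := hγ
      rw [Finsupp.mem_support_iff, ← hf, happly k f]
      intro h0
      have := abs_c (List.ofFn f)
      rw [h0] at this
      simp at this
  constructor
  · intro k
    rw [hsupp k, Finset.sum_image (fun f _ g _ h => hminj' f g h)]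
    have : ∀ f : Fin k → Fin 3, |(w ^ k).coeff (m k f)| = 1 := by
      intro f; rw [happly k f, abs_c]
    rw [Finset.sum_congr rfl fun f _ => this f]
    rw [Finset.sum_const, Finset.card_univ, Fintype.card_fun]
    simp
  · intro k l hkl
    rw [Finset.disjoint_left]
    intro γ hk hl
    rw [hsupp k] at hk
    rw [hsupp l] at hl
    simp only [Finset.mem_image] at hk hl
    obtain ⟨f, _, hf⟩ := hk
    obtain ⟨g, _, hg⟩ := hl
    exact hkl (hminj f g (hf.trans hg.symm))
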